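/- Prefix Filter correctness (overlap version): Let r and s be finite lists of distinct tokens sorted by a fixed linear order, and suppose |r ∩ s| ≥ τ for a positive integer τ. Then the prefix of r of length |r| − τ + 1 and the prefix of s of length |s| − τ + 1 share at least one common token. -/

import Mathlib

private lemma mem_take_of_sorted_card_le
    {α : Type*} [LinearOrder α] {l : List α} (hl : l.Pairwise (· < ·))
    {x : α} (hx : x ∈ l) {τ : ℕ} (hτ0 : 0 < τ)
    (h : τ ≤ (l.toFinset.filter (fun y => x ≤ y)).card) :
    x ∈ l.take (l.length - τ + 1) := by
  induction l with
  | nil => simp at hx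
  | cons a t ih =>
    rcases List.mem_cons.mp hx with rfl | hxt
    · rw [List.take_succ_cons]
      exact List.mem_cons_self
    · have hat : a < x := (List.pairwise_cons.mp hl).1 x hxt
      have hna : ¬ (x ≤ a) := not_le.mpr hat
      have htsort : t.Pairwise (· < ·) := (List.pairwise_cons.mp hl).2
      have hsub : t.toFinset.filter (fun y => x ≤ y) ⊆
          (a :: t).toFinset.filter (fun y => x ≤ y) := by
        intro y hy
        simp only [Finset.mem_filter, List.mem_toFinset, List.mem_cons] at *
        tauto
      have hsub' : (a :: t).toFinset.filter (fun y => x ≤ y) ⊆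
          t.toFinset.filter (fun y => x ≤ y) := by
        intro y hy
        simp only [Finset.mem_filter, List.mem_toFinset, List.mem_cons] at *
        rcases hy with ⟨rfl | hyt, hxy⟩
        · exact absurd hxy hna
        · exact ⟨hyt, hxy⟩
      have hcard : τ ≤ (t.toFinset.filter (fun y => x ≤ y)).card :=
        le_trans h (Finset.card_le_card hsub')
      have hτt : τ ≤ t.length := by
        calc τ ≤ (t.toFinset.filter (fun y => x ≤ y)).card := hcard
        _ ≤ t.toFinset.card := Finset.card_filter_le _ _
        _ ≤ t.length := List.toFinset_card_le t
      have := ih htsort hxt hcard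
      have hlen : (a :: t).length - τ + 1 = (t.length - τ + 1) + 1 := by
        simp only [List.length_cons]; omega
      rw [hlen, List.take_succ_cons]
      exact List.mem_cons_of_mem _ this

theorem prefix_filter_overlap
    {α : Type*} [LinearOrder α] (r s : List α) (τ : ℕ)
    (hr : r.Pairwise (· < ·)) (hs : s.Pairwise (· < ·))
    (hτ0 : 0 < τ) (hτr : τ ≤ r.length) (hτs : τ ≤ s.length)
    (hov : τ ≤ (r.toFinset ∩ s.toFinset).card) :
    ∃ t, t ∈ r.take (r.length - τ + 1) ∧ t ∈ s.take (s.length - τ + 1) := by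
  set I := r.toFinset ∩ s.toFinset with hI
  have hne : I.Nonempty := Finset.card_pos.mp (lt_of_lt_of_le hτ0 hov)
  set x := I.min' hne with hx
  have hxI : x ∈ I := I.min'_mem hne
  have hxr : x ∈ r := List.mem_toFinset.mp (Finset.mem_inter.mp hxI).1
  have hxs : x ∈ s := List.mem_toFinset.mp (Finset.mem_inter.mp hxI).2
  have hsubr : I ⊆ r.toFinset.filter (fun y => x ≤ y) := by
    intro y hy
    exact Finset.mem_filter.mpr ⟨(Finset.mem_inter.mp hy).1, I.min'_le y hy⟩
  have hsubs : I ⊆ s.toFinset.filter (fun y => x ≤ y) := by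
    intro y hy
    exact Finset.mem_filter.mpr ⟨(Finset.mem_inter.mp hy).2, I.min'_le y hy⟩
  exact ⟨x,
    mem_take_of_sorted_card_le hr hxr hτ0 (le_trans hov (Finset.card_le_card hsubr)),
    mem_take_of_sorted_card_le hs hxs hτ0 (le_trans hov (Finset.card_le_card hsubs))⟩
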